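/- If H is a linear forest consisting of k paths with a_1, ..., a_k vertices respectively, then every connected H-free graph has diameter at most k - 3 + (a_1 + ... + a_k). -/

import Mathlib

open SimpleGraph

/-- `G` is `H`-free: `G` contains no induced subgraph isomorphic to `H`,
equivalently there is no graph embedding of `H` into `G`. -/
def HFree {V W : Type*} (G : SimpleGraph V) (H : SimpleGraph W) : Prop :=
  IsEmpty (H ↪g G)

/-- The linear forest that is the disjoint union of `k` paths, the `i`-th
path having `a i` vertices (vertices of each path are consecutive numbers). -/
def linearForest (k : ℕ) (a : Fin k → ℕ) : SimpleGraph (Σ i : Fin k, Fin (a i)) where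
  Adj x y := x.1 = y.1 ∧ ((x.2 : ℕ) + 1 = (y.2 : ℕ) ∨ (y.2 : ℕ) + 1 = (x.2 : ℕ))
  symm := ⟨by rintro x y ⟨h1, h2⟩; exact ⟨h1.symm, h2.symm⟩⟩
  loopless := ⟨by rintro x ⟨-, h⟩; omega⟩

/-! ### Auxiliary definitions -/

/-- Partial sums `∑_{l < m} a l` (with junk value past `k`). -/
def lfS (k : ℕ) (a : Fin k → ℕ) (m : ℕ) : ℕ :=
  ∑ l ∈ Finset.range m, if h : l < k then a ⟨l, h⟩ else 0

/-- The position of the vertex `x` of the linear forest along a long path: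
consecutive blocks separated by a one-vertex gap. -/
def lfPos (k : ℕ) (a : Fin k → ℕ) (x : Σ i : Fin k, Fin (a i)) : ℕ :=
  lfS k a x.1 + x.1 + x.2

lemma lfS_succ (k : ℕ) (a : Fin k → ℕ) {m : ℕ} (h : m < k) :
    lfS k a (m + 1) = lfS k a m + a ⟨m, h⟩ := by
  rw [lfS, Finset.sum_range_succ, dif_pos h]; rfl

lemma lfS_mono (k : ℕ) (a : Fin k → ℕ) {m n : ℕ} (h : m ≤ n) :
    lfS k a m ≤ lfS k a n :=
  Finset.sum_le_sum_of_subset (Finset.range_subset_range.mpr h)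

lemma lfS_k (k : ℕ) (a : Fin k → ℕ) : lfS k a k = ∑ i, a i := by
  rw [lfS, ← Fin.sum_univ_eq_sum_range (fun l => if h : l < k then a ⟨l, h⟩ else 0) k]
  exact Finset.sum_congr rfl fun i _ => by simp [i.isLt]

lemma lfPos_gap (k : ℕ) (a : Fin k → ℕ) {x y : Σ i : Fin k, Fin (a i)}
    (h : (x.1 : ℕ) < (y.1 : ℕ)) : lfPos k a x + 2 ≤ lfPos k a y := by
  have h1 : lfS k a (x.1 + 1) = lfS k a x.1 + a x.1 := by
    rw [lfS_succ k a x.1.isLt]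
  have h2 : lfS k a (x.1 + 1) ≤ lfS k a y.1 := lfS_mono k a h
  have h3 : (x.2 : ℕ) < a x.1 := x.2.isLt
  unfold lfPos
  omega

lemma lfPos_le (k : ℕ) (a : Fin k → ℕ) (x : Σ i : Fin k, Fin (a i)) :
    lfPos k a x + 2 ≤ lfS k a k + k := by
  have h1 : lfS k a (x.1 + 1) = lfS k a x.1 + a x.1 := by
    rw [lfS_succ k a x.1.isLt]
  have h2 : lfS k a (x.1 + 1) ≤ lfS k a k := lfS_mono k a x.1.isLt
  have h3 : (x.2 : ℕ) < a x.1 := x.2.isLt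
  have h4 : (x.1 : ℕ) < k := x.1.isLt
  unfold lfPos
  omega

lemma lfPos_inj (k : ℕ) (a : Fin k → ℕ) {x y : Σ i : Fin k, Fin (a i)}
    (h : lfPos k a x = lfPos k a y) : x = y := by
  obtain ⟨i, j⟩ := x
  obtain ⟨i', j'⟩ := y
  rcases lt_trichotomy (i : ℕ) (i' : ℕ) with hlt | heq | hgt
  · have := lfPos_gap k a (x := ⟨i, j⟩) (y := ⟨i', j'⟩) hlt; omega
  · have hii : i = i' := Fin.ext heq
    subst hii
    have : (j : ℕ) = (j' : ℕ) := by unfold lfPos at h; simpa using h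
    rw [Fin.ext this]
  · have := lfPos_gap k a (x := ⟨i', j'⟩) (y := ⟨i, j⟩) hgt; omega

lemma dist_getVert_le {V : Type*} {G : SimpleGraph V} (hconn : G.Connected) {u v : V}
    (p : G.Walk u v) : ∀ i, G.dist u (p.getVert i) ≤ i := by
  intro i
  induction i with
  | zero => simp [p.getVert_zero]
  | succ i ih =>
    rcases lt_or_ge i p.length with h | h
    · have hadj := p.adj_getVert_succ h
      have h1 := hconn.dist_triangle (u := u) (v := p.getVert i) (w := p.getVert (i + 1))
      have h2 : G.dist (p.getVert i) (p.getVert (i + 1)) ≤ 1 := dist_le hadj.toWalk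
      omega
    · rw [p.getVert_of_length_le (by omega)]
      have := dist_le p
      omega

lemma dist_getVert_eq {V : Type*} {G : SimpleGraph V} (hconn : G.Connected) {u v : V}
    (p : G.Walk u v) (hp : p.length = G.dist u v) {i : ℕ} (hi : i ≤ p.length) :
    G.dist u (p.getVert i) = i := by
  have h1 := dist_getVert_le hconn p i
  have h2 : G.dist v (p.getVert i) ≤ p.length - i := by
    have h := dist_getVert_le hconn p.reverse (p.length - i)
    rwa [p.getVert_reverse, Nat.sub_sub_self hi] at h
  have h3 := hconn.dist_triangle (u := u) (v := p.getVert i) (w := v)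
  have h4 : G.dist (p.getVert i) v = G.dist v (p.getVert i) := dist_comm ..
  omega

/-- If `H` is a linear forest consisting of `k` paths with `a 0, …, a (k-1)` vertices,
then every connected `H`-free graph has diameter at most `k - 3 + ∑ i, a i`. -/
theorem diameter_le_of_linearForest_free {V : Type*} (G : SimpleGraph V)
    (k : ℕ) (hk : 1 ≤ k) (a : Fin k → ℕ) (ha : ∀ i, 1 ≤ a i)
    (hconn : G.Connected) (hfree : HFree G (linearForest k a)) :
    ∀ u v : V, (G.dist u v : ℤ) ≤ (k : ℤ) - 3 + ∑ i, (a i : ℤ) := by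
  intro u v
  by_contra hlt
  push_neg at hlt
  obtain ⟨p, hp⟩ := hconn.exists_walk_length_eq_dist u v
  have hsum : (∑ i, (a i : ℤ)) = ((∑ i, a i : ℕ) : ℤ) := by push_cast; rfl
  have hlen : lfS k a k + k ≤ p.length + 2 := by
    have : ((lfS k a k : ℤ)) + k < (G.dist u v : ℤ) + 3 := by
      rw [lfS_k]; omega
    omega
  -- every position fits in the walk
  have hfit : ∀ x : Σ i : Fin k, Fin (a i), lfPos k a x ≤ p.length := fun x => by
    have := lfPos_le k a x; omega
  set f : (Σ i : Fin k, Fin (a i)) → V := fun x => p.getVert (lfPos k a x) with hf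
  have hdist : ∀ x, G.dist u (f x) = lfPos k a x := fun x =>
    dist_getVert_eq hconn p hp (hfit x)
  have hposinj : ∀ x y, f x = f y → lfPos k a x = lfPos k a y := by
    intro x y hxy
    have := hdist x
    rw [hxy, hdist y] at this
    omega
  have emb : linearForest k a ↪g G := by
    refine ⟨⟨f, fun x y hxy => lfPos_inj k a (hposinj x y hxy)⟩, ?_⟩
    intro x y
    constructor
    · intro hadj
      -- adjacency in G implies positions differ by exactly one
      have hne : lfPos k a x ≠ lfPos k a y := by
        intro h
        have heq : f x = f y := by rw [hf]; simp only; rw [h]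
        have hadj' : G.Adj (f x) (f y) := hadj
        rw [heq] at hadj'
        exact G.loopless.irrefl _ hadj'
      have t1 := hconn.dist_triangle (u := u) (v := f x) (w := f y)
      have t2 := hconn.dist_triangle (u := u) (v := f y) (w := f x)
      have e1 : G.dist (f x) (f y) ≤ 1 := dist_le hadj.toWalk
      have e2 : G.dist (f y) (f x) ≤ 1 := dist_le hadj.symm.toWalk
      have hd1 := hdist x
      have hd2 := hdist y
      have hone : lfPos k a x + 1 = lfPos k a y ∨ lfPos k a y + 1 = lfPos k a x := by omega
      -- deduce the two vertices lie in the same path of the forest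
      have hsame : (x.1 : ℕ) = (y.1 : ℕ) := by
        rcases lt_trichotomy (x.1 : ℕ) (y.1 : ℕ) with h | h | h
        · have := lfPos_gap k a h; omega
        · exact h
        · have := lfPos_gap k a h; omega
      have hii : x.1 = y.1 := Fin.ext hsame
      refine ⟨hii, ?_⟩
      have hSeq : lfS k a x.1 = lfS k a y.1 := by rw [hii]
      unfold lfPos at hone
      omega
    · rintro ⟨hii, hoff⟩
      have hSeq : lfS k a x.1 = lfS k a y.1 := by rw [hii]
      have hone : lfPos k a x + 1 = lfPos k a y ∨ lfPos k a y + 1 = lfPos k a x := by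
        unfold lfPos
        rcases hoff with h | h
        · left; rw [← Fin.val_eq_val] at hii; omega
        · right; rw [← Fin.val_eq_val] at hii; omega
      rcases hone with h | h
      · have : lfPos k a x < p.length := by have := hfit y; omega
        have := p.adj_getVert_succ this
        rw [h] at this
        exact this
      · have : lfPos k a y < p.length := by have := hfit x; omega
        have := p.adj_getVert_succ this
        rw [h] at this
        exact this.symm
  exact hfree.false emb
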